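/- The function Q(x) = e^{ψ(x+1)} − x is strictly convex on the interval (−1, ∞). -/

import Mathlib

open Real Filter Set

/-- The digamma (psi) function: the logarithmic derivative of the gamma function. -/
noncomputable def psi (x : ℝ) : ℝ := deriv (fun t : ℝ => Real.log (Real.Gamma t)) x


open Real Filter Set Finset Topology

namespace QAux

noncomputable def p1 (x : ℝ) : ℝ :=
  -Real.eulerMascheroniConstant - ∑' k : ℕ, ((x + k)⁻¹ - ((k : ℝ) + 1)⁻¹)

noncomputable def p2 (x : ℝ) : ℝ := ∑' k : ℕ, ((x + k) ^ 2)⁻¹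

noncomputable def p3 (x : ℝ) : ℝ := ∑' k : ℕ, (-2) * ((x + k) ^ 3)⁻¹

lemma sumk : Summable (fun k : ℕ => (((k : ℝ) + 1) ^ 2)⁻¹) := by
  have h := summable_one_div_nat_pow.mpr (le_refl 2)
  have h2 := (summable_nat_add_iff 1).mpr h
  refine h2.congr fun k => ?_
  push_cast
  rw [one_div]

lemma key_bound {a x : ℝ} (ha : 0 < a) (ha1 : a ≤ 1) (hax : a ≤ x) (k : ℕ) :
    a * ((k : ℝ) + 1) ≤ x + k := by
  have hk : (0 : ℝ) ≤ k := Nat.cast_nonneg k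
  nlinarith

lemma xk_pos {x : ℝ} (hx : 0 < x) (k : ℕ) : 0 < x + (k : ℝ) := by
  have hk : (0 : ℝ) ≤ k := Nat.cast_nonneg k
  linarith

lemma S2 {x : ℝ} (hx : 0 < x) : Summable (fun k : ℕ => ((x + (k : ℝ)) ^ 2)⁻¹) := by
  set a := min x 1 with ha_def
  have ha : 0 < a := lt_min hx one_pos
  have ha1 : a ≤ 1 := min_le_right _ _
  have hax : a ≤ x := min_le_left _ _
  refine Summable.of_nonneg_of_le (fun k => by positivity)
    (fun k => ?_) (sumk.mul_left (a ^ 2)⁻¹)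
  have h1 := key_bound ha ha1 hax k
  have h2 : (0 : ℝ) < a * ((k : ℝ) + 1) := by positivity
  have h3 : (a * ((k : ℝ) + 1)) ^ 2 ≤ (x + k) ^ 2 := by nlinarith
  calc ((x + (k : ℝ)) ^ 2)⁻¹ ≤ ((a * ((k : ℝ) + 1)) ^ 2)⁻¹ := by
        apply inv_anti₀ (by positivity) h3
    _ = (a ^ 2)⁻¹ * (((k : ℝ) + 1) ^ 2)⁻¹ := by rw [mul_pow, mul_inv]

lemma S3' {x : ℝ} (hx : 0 < x) : Summable (fun k : ℕ => ((x + (k : ℝ)) ^ 3)⁻¹) := by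
  refine Summable.of_nonneg_of_le (fun k => by positivity) (fun k => ?_) ((S2 hx).mul_left x⁻¹)
  have hk := xk_pos hx k
  have h1 : ((x + (k : ℝ)) ^ 3)⁻¹ = (x + k)⁻¹ * ((x + k) ^ 2)⁻¹ := by
    rw [← mul_inv]; ring_nf
  rw [h1]
  have h2 : (x + (k : ℝ))⁻¹ ≤ x⁻¹ := by
    apply inv_anti₀ hx; linarith [Nat.cast_nonneg (α := ℝ) k]
  have h3 : (0:ℝ) ≤ ((x + (k:ℝ)) ^ 2)⁻¹ := by positivity
  exact mul_le_mul_of_nonneg_right h2 h3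

lemma S3 {x : ℝ} (hx : 0 < x) : Summable (fun k : ℕ => (-2) * ((x + (k : ℝ)) ^ 3)⁻¹) :=
  (S3' hx).mul_left _

lemma hasSum_telescope {F : ℕ → ℝ} (hd : ∀ k, F (k + 1) ≤ F k)
    (h0 : Tendsto F atTop (𝓝 0)) : HasSum (fun k => F k - F (k + 1)) (F 0) := by
  rw [hasSum_iff_tendsto_nat_of_nonneg (fun k => sub_nonneg.mpr (hd k))]
  have : ∀ n, ∑ i ∈ Finset.range n, (F i - F (i + 1)) = F 0 - F n := fun n =>
    Finset.sum_range_sub' F n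
  simp only [this]
  simpa using tendsto_const_nhds.sub h0

lemma tendsto_xk {x : ℝ} : Tendsto (fun k : ℕ => x + (k : ℝ)) atTop atTop :=
  tendsto_atTop_add_const_left _ x tendsto_natCast_atTop_atTop

lemma tendsto_inv_xk {x : ℝ} : Tendsto (fun k : ℕ => (x + (k : ℝ))⁻¹) atTop (𝓝 0) :=
  tendsto_inv_atTop_zero.comp tendsto_xk

lemma tendsto_inv_xk_sq {x : ℝ} : Tendsto (fun k : ℕ => ((x + (k : ℝ)) ^ 2)⁻¹) atTop (𝓝 0) := by
  have h := tendsto_inv_xk (x := x) |>.pow 2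
  simpa [← inv_pow] using h

end QAux
-- appended after part1 content (will merge)
namespace QAux
open Real Filter Set Finset Topology

lemma p2_gt {x : ℝ} (hx : 0 < x) : x⁻¹ + (2 * x ^ 2)⁻¹ < p2 x := by
  set F : ℕ → ℝ := fun k => (x + k)⁻¹ + (2 * (x + k) ^ 2)⁻¹ with hF
  have hpos : ∀ k : ℕ, 0 < x + (k : ℝ) := xk_pos hx
  have hd : ∀ k, F (k + 1) ≤ F k := by
    intro k
    have h1 := hpos k
    simp only [hF]
    push_cast
    have e1 : (x + ((k : ℝ) + 1))⁻¹ ≤ (x + k)⁻¹ := by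
      apply inv_anti₀ h1; linarith
    have e2 : (2 * (x + ((k : ℝ) + 1)) ^ 2)⁻¹ ≤ (2 * (x + (k : ℝ)) ^ 2)⁻¹ := by
      apply inv_anti₀ (by positivity); nlinarith
    linarith
  have h0 : Tendsto F atTop (𝓝 0) := by
    have h2 : Tendsto (fun k : ℕ => (2 * (x + (k : ℝ)) ^ 2)⁻¹) atTop (𝓝 0) := by
      have := tendsto_inv_xk_sq (x := x)
      have h3 := this.const_mul (2⁻¹ : ℝ)
      simp only [mul_zero] at h3
      refine h3.congr fun k => ?_
      rw [mul_inv]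
    have h4 := (tendsto_inv_xk (x := x)).add h2
    simp only [add_zero] at h4
    exact h4
  have hsum : HasSum (fun k => F k - F (k + 1)) (F 0) := hasSum_telescope hd h0
  have hterm : ∀ k : ℕ, F k - F (k + 1) ≤ ((x + (k : ℝ)) ^ 2)⁻¹ - (2 * (x + k) ^ 2 * (x + k + 1) ^ 2)⁻¹ := by
    intro k
    have h1 := hpos k
    have heq : F k - F (k + 1) = ((x + (k : ℝ)) ^ 2)⁻¹ - (2 * (x + k) ^ 2 * (x + k + 1) ^ 2)⁻¹ := by
      simp only [hF]
      push_cast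
      have h2 : x + (k : ℝ) + 1 > 0 := by linarith
      field_simp
      ring
    exact le_of_eq heq
  have hterm' : ∀ k : ℕ, F k - F (k + 1) ≤ ((x + (k : ℝ)) ^ 2)⁻¹ := by
    intro k
    have h1 := hpos k
    have h2 : (0:ℝ) < (2 * (x + (k:ℝ)) ^ 2 * (x + k + 1) ^ 2)⁻¹ := by
      have : (0:ℝ) < x + (k:ℝ) + 1 := by linarith
      positivity
    linarith [hterm k]
  have hstrict : F 0 - F 1 < ((x + (0 : ℕ) : ℝ) ^ 2)⁻¹ := by
    have h1 := hpos 0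
    have h2 : (0:ℝ) < (2 * (x + (0:ℕ)) ^ 2 * (x + (0:ℕ) + 1) ^ 2)⁻¹ := by
      push_cast
      positivity
    linarith [hterm 0]
  have hlt := Summable.tsum_lt_tsum (i := 0) hterm' hstrict hsum.summable (S2 hx)
  rw [hsum.tsum_eq] at hlt
  have hF0 : F 0 = x⁻¹ + (2 * x ^ 2)⁻¹ := by simp [hF]
  rw [hF0] at hlt
  exact hlt

lemma p2_pos {x : ℝ} (hx : 0 < x) : 0 < p2 x := by
  refine Summable.tsum_pos (S2 hx) (fun k => by positivity) 0 ?_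
  have := xk_pos hx 0
  positivity

lemma p2_le {x : ℝ} (hx : 0 < x) : p2 (x + 1) ≤ x⁻¹ := by
  set G : ℕ → ℝ := fun k => (x + k)⁻¹ with hG
  have hpos : ∀ k : ℕ, 0 < x + (k : ℝ) := xk_pos hx
  have hd : ∀ k, G (k + 1) ≤ G k := by
    intro k
    simp only [hG]
    push_cast
    apply inv_anti₀ (hpos k); linarith
  have hsum : HasSum (fun k => G k - G (k + 1)) (G 0) := hasSum_telescope hd tendsto_inv_xk
  have hterm : ∀ k : ℕ, ((x + 1 + (k : ℝ)) ^ 2)⁻¹ ≤ G k - G (k + 1) := by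
    intro k
    have h1 := hpos k
    have h2 : (0:ℝ) < x + (k:ℝ) + 1 := by linarith
    have heq : G k - G (k + 1) = ((x + k) * (x + k + 1))⁻¹ := by
      simp only [hG]; push_cast
      have e : x + ((k:ℝ) + 1) = x + k + 1 := by ring
      rw [e, inv_sub_inv h1.ne' (by linarith : x + (k:ℝ) + 1 ≠ 0), inv_eq_one_div]
      congr 1; ring
    rw [heq]
    apply inv_anti₀ (by positivity)
    nlinarith
  have := Summable.tsum_le_tsum hterm (S2 (by linarith : (0:ℝ) < x + 1)) hsum.summable
  rw [hsum.tsum_eq] at this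
  have hG0 : G 0 = x⁻¹ := by simp [hG]
  rw [hG0] at this
  exact this

lemma p2_rec {x : ℝ} (hx : 0 < x) : p2 x = (x ^ 2)⁻¹ + p2 (x + 1) := by
  rw [p2, Summable.tsum_eq_zero_add (S2 hx)]
  congr 1
  · norm_num
  · rw [p2]
    apply tsum_congr
    intro k
    push_cast
    ring_nf

lemma p3_rec {x : ℝ} (hx : 0 < x) : p3 x = (-2) * (x ^ 3)⁻¹ + p3 (x + 1) := by
  rw [p3, Summable.tsum_eq_zero_add (S3 hx)]
  congr 1
  · norm_num
  · rw [p3]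
    apply tsum_congr
    intro k
    push_cast
    ring_nf

lemma p3_nonpos {x : ℝ} (hx : 0 < x) : p3 x ≤ 0 := by
  apply tsum_nonpos
  intro k
  have := xk_pos hx k
  have h : (0:ℝ) < ((x + (k:ℝ)) ^ 3)⁻¹ := by positivity
  nlinarith

lemma neg_p3_le {x : ℝ} (hx : 0 < x) : -p3 x ≤ 2 * x⁻¹ * p2 x := by
  have h1 : -p3 x = ∑' k : ℕ, 2 * ((x + (k : ℝ)) ^ 3)⁻¹ := by
    rw [p3, ← tsum_neg]
    apply tsum_congr; intro k; ring
  rw [h1]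
  have h2 : 2 * x⁻¹ * p2 x = ∑' k : ℕ, 2 * x⁻¹ * ((x + (k : ℝ)) ^ 2)⁻¹ := by
    rw [p2, ← tsum_mul_left]
  rw [h2]
  apply Summable.tsum_le_tsum _ ((S3' hx).mul_left 2) ((S2 hx).mul_left _)
  intro k
  have h3 := xk_pos hx k
  have h4 : ((x + (k : ℝ)) ^ 3)⁻¹ = (x + k)⁻¹ * ((x + k) ^ 2)⁻¹ := by
    rw [← mul_inv]; ring_nf
  rw [h4]
  have h5 : (x + (k : ℝ))⁻¹ ≤ x⁻¹ := by
    apply inv_anti₀ hx; linarith [Nat.cast_nonneg (α := ℝ) k]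
  have h6 : (0:ℝ) ≤ ((x + (k:ℝ)) ^ 2)⁻¹ := by positivity
  nlinarith

noncomputable def Fq (y : ℝ) : ℝ := (p2 y) ^ 2 + p3 y

lemma Fq_anti {y : ℝ} (hy : 0 < y) : Fq (y + 1) < Fq y := by
  have hy1 : (0:ℝ) < y + 1 := by linarith
  have e1 : Fq y = Fq (y + 1) + (2 * (y ^ 2)⁻¹ * p2 (y + 1) + ((y ^ 2)⁻¹) ^ 2 - 2 * (y ^ 3)⁻¹) := by
    rw [Fq, Fq, p2_rec hy, p3_rec hy]; ring
  have key : 2 * (y ^ 2)⁻¹ * ((y + 1)⁻¹ + (2 * (y + 1) ^ 2)⁻¹) + ((y ^ 2)⁻¹) ^ 2 - 2 * (y ^ 3)⁻¹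
      = (y ^ 4 * (y + 1) ^ 2)⁻¹ := by
    field_simp
    ring
  have hgt := p2_gt hy1
  have hc : (0:ℝ) < 2 * (y ^ 2)⁻¹ := by positivity
  have := mul_lt_mul_of_pos_left hgt hc
  have hpos : (0:ℝ) < (y ^ 4 * (y + 1) ^ 2)⁻¹ := by positivity
  linarith [e1, key]

lemma Fq_tendsto {y : ℝ} (hy : 0 < y) :
    Tendsto (fun n : ℕ => Fq (y + 1 + n)) atTop (𝓝 0) := by
  have hb : ∀ n : ℕ, |Fq (y + 1 + n)| ≤ 3 * ((y + (n : ℝ)) ^ 2)⁻¹ := by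
    intro n
    have hyn : (0:ℝ) < y + n := xk_pos hy n
    have hz : (0:ℝ) < y + 1 + n := by linarith
    have hup : p2 (y + 1 + n) ≤ (y + n)⁻¹ := by
      have := p2_le hyn
      have heq : (y + (n:ℝ)) + 1 = y + 1 + n := by ring
      rwa [heq] at this
    have hp2pos := p2_pos hz
    have hp3le := p3_nonpos hz
    have hp3ge := neg_p3_le hz
    have hzinv : (y + 1 + (n:ℝ))⁻¹ ≤ (y + n)⁻¹ := by
      apply inv_anti₀ hyn; linarith
    have hb1 : p2 (y + 1 + n) ^ 2 ≤ ((y + (n:ℝ)) ^ 2)⁻¹ := by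
      have : p2 (y + 1 + n) ^ 2 ≤ ((y + (n:ℝ))⁻¹) ^ 2 := by nlinarith
      rwa [inv_pow] at this
    have hb2 : -p3 (y + 1 + n) ≤ 2 * ((y + (n:ℝ)) ^ 2)⁻¹ := by
      have h1 : 2 * (y + 1 + (n:ℝ))⁻¹ * p2 (y + 1 + n) ≤ 2 * (y + (n:ℝ))⁻¹ * (y + n)⁻¹ := by
        have h2 : (0:ℝ) < (y + 1 + (n:ℝ))⁻¹ := by positivity
        nlinarith
      have h3 : (y + (n:ℝ))⁻¹ * (y + n)⁻¹ = ((y + (n:ℝ)) ^ 2)⁻¹ := by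
        rw [← mul_inv]; ring_nf
      calc -p3 (y + 1 + n) ≤ 2 * (y + 1 + (n:ℝ))⁻¹ * p2 (y + 1 + n) := hp3ge
        _ ≤ 2 * (y + (n:ℝ))⁻¹ * (y + n)⁻¹ := h1
        _ = 2 * ((y + (n:ℝ)) ^ 2)⁻¹ := by rw [mul_assoc, h3]
    rw [abs_le]
    constructor
    · have : (0:ℝ) ≤ p2 (y + 1 + n) ^ 2 := sq_nonneg _
      simp only [Fq]
      have hi2 : (0:ℝ) ≤ ((y + (n:ℝ)) ^ 2)⁻¹ := by positivity
      linarith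
    · simp only [Fq]
      have hi2 : (0:ℝ) ≤ ((y + (n:ℝ)) ^ 2)⁻¹ := by positivity
      linarith
  have h0 : Tendsto (fun n : ℕ => 3 * ((y + (n : ℝ)) ^ 2)⁻¹) atTop (𝓝 0) := by
    have := (tendsto_inv_xk_sq (x := y)).const_mul (3:ℝ)
    simpa using this
  exact squeeze_zero_norm (fun n => by rw [Real.norm_eq_abs]; exact hb n) h0

lemma Fq_pos {y : ℝ} (hy : 0 < y) : 0 < Fq y := by
  have hmono : ∀ n : ℕ, Fq (y + 1 + n) ≤ Fq (y + 1) := by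
    intro n
    induction n with
    | zero => simp
    | succ m ih =>
      have hm : (0:ℝ) < y + 1 + m := by
        have : (0:ℝ) ≤ m := Nat.cast_nonneg m
        linarith
      have := Fq_anti hm
      have heq : y + 1 + ((m : ℝ) + 1) = (y + 1 + m) + 1 := by ring
      push_cast
      rw [heq]
      linarith
  have h0 : (0:ℝ) ≤ Fq (y + 1) :=
    le_of_tendsto (Fq_tendsto hy) (Eventually.of_forall hmono)
  linarith [Fq_anti hy]

end QAux
namespace QAux
open Real Filter Set Finset Topology

noncomputable def ell (n : ℕ) (x : ℝ) : ℝ :=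
  x * Real.log n - ∑ k ∈ Finset.range (n + 1), Real.log (x + k) + Real.log (Nat.factorial n)

noncomputable def d1 (n : ℕ) (x : ℝ) : ℝ :=
  Real.log n - ∑ k ∈ Finset.range (n + 1), (x + (k : ℝ))⁻¹

noncomputable def d2 (n : ℕ) (x : ℝ) : ℝ :=
  ∑ k ∈ Finset.range (n + 1), ((x + (k : ℝ)) ^ 2)⁻¹

noncomputable def d3 (n : ℕ) (x : ℝ) : ℝ :=
  ∑ k ∈ Finset.range (n + 1), (-2) * ((x + (k : ℝ)) ^ 3)⁻¹

lemma hasDerivAt_ell (n : ℕ) {x : ℝ} (hx : 0 < x) : HasDerivAt (ell n) (d1 n x) x := by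
  have h1 : HasDerivAt (fun x : ℝ => x * Real.log n) (Real.log n) x := by
    simpa using (hasDerivAt_id x).mul_const (Real.log n)
  have h2 : HasDerivAt (fun x : ℝ => ∑ k ∈ Finset.range (n + 1), Real.log (x + k))
      (∑ k ∈ Finset.range (n + 1), (x + (k : ℝ))⁻¹) x := by
    apply HasDerivAt.fun_sum
    intro k _
    have hk := xk_pos hx k
    have := (Real.hasDerivAt_log hk.ne').comp x ((hasDerivAt_id x).add_const (k : ℝ))
    simpa [Function.comp_def] using this
  delta ell d1
  simpa [ell, d1] using (h1.sub h2).add_const (Real.log (Nat.factorial n))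

lemma hasDerivAt_d1 (n : ℕ) {x : ℝ} (hx : 0 < x) : HasDerivAt (d1 n) (d2 n x) x := by
  have h2 : HasDerivAt (fun x : ℝ => ∑ k ∈ Finset.range (n + 1), (x + (k : ℝ))⁻¹)
      (∑ k ∈ Finset.range (n + 1), -((x + (k : ℝ)) ^ 2)⁻¹) x := by
    apply HasDerivAt.fun_sum
    intro k _
    have hk := xk_pos hx k
    have := ((hasDerivAt_id x).add_const (k : ℝ)).inv hk.ne'
    simpa [neg_div, one_div, Pi.inv_def] using this
  have := h2.const_sub (Real.log n)
  simp only [Finset.sum_neg_distrib, neg_neg] at this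
  delta d1 d2
  simpa [d1, d2] using this

lemma hasDerivAt_d2 (n : ℕ) {x : ℝ} (hx : 0 < x) : HasDerivAt (d2 n) (d3 n x) x := by
  apply HasDerivAt.fun_sum
  intro k _
  have hk := xk_pos hx k
  have hsq : HasDerivAt (fun x : ℝ => (x + (k : ℝ)) ^ 2) (2 * (x + k)) x := by
    have := ((hasDerivAt_id x).add_const (k : ℝ)).pow 2
    simpa [mul_comm, Pi.pow_def] using this
  have := hsq.inv (by positivity : (x + (k:ℝ)) ^ 2 ≠ 0)
  refine this.congr_deriv ?_
  field_simp

section Uniform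

variable {a b : ℝ}

lemma mem_bound (ha : 0 < a) (ha1 : a ≤ 1) {x : ℝ} (hx : x ∈ Ioo a b) (k : ℕ) :
    a * ((k : ℝ) + 1) ≤ x + k :=
  key_bound ha ha1 hx.1.le k

lemma U2 (ha : 0 < a) (ha1 : a ≤ 1) : TendstoUniformlyOn d2 p2 atTop (Ioo a b) := by
  have hfu : ∀ (k : ℕ) (x : ℝ), x ∈ Ioo a b → ‖((x + (k : ℝ)) ^ 2)⁻¹‖ ≤ (a ^ 2)⁻¹ * (((k : ℝ) + 1) ^ 2)⁻¹ := by
    intro k x hx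
    have h1 := mem_bound ha ha1 hx k
    have hxk : (0:ℝ) < x + k := lt_of_lt_of_le (by positivity) h1
    rw [Real.norm_eq_abs, abs_of_pos (by positivity)]
    calc ((x + (k : ℝ)) ^ 2)⁻¹ ≤ ((a * ((k : ℝ) + 1)) ^ 2)⁻¹ := by
          exact inv_anti₀ (by positivity) (pow_le_pow_left₀ (by positivity) h1 2)
      _ = (a ^ 2)⁻¹ * (((k : ℝ) + 1) ^ 2)⁻¹ := by rw [mul_pow, mul_inv]
  have base := tendstoUniformlyOn_tsum_nat (s := Ioo a b) (sumk.mul_left ((a ^ 2)⁻¹)) hfu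
  intro u hu
  exact (tendsto_add_atTop_nat 1).eventually (base u hu)

lemma U3 (ha : 0 < a) (ha1 : a ≤ 1) : TendstoUniformlyOn d3 p3 atTop (Ioo a b) := by
  have hfu : ∀ (k : ℕ) (x : ℝ), x ∈ Ioo a b →
      ‖(-2) * ((x + (k : ℝ)) ^ 3)⁻¹‖ ≤ 2 * (a ^ 3)⁻¹ * (((k : ℝ) + 1) ^ 2)⁻¹ := by
    intro k x hx
    have h1 := mem_bound ha ha1 hx k
    have hxk : (0:ℝ) < x + k := lt_of_lt_of_le (by positivity) h1
    rw [Real.norm_eq_abs, abs_mul, abs_of_pos (by positivity : (0:ℝ) < ((x + (k:ℝ)) ^ 3)⁻¹)]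
    have : |(-2 : ℝ)| = 2 := by norm_num
    rw [this]
    have hk1 : (0:ℝ) < (k : ℝ) + 1 := by positivity
    have h3 : (a * ((k : ℝ) + 1)) ^ 3 ≤ (x + k) ^ 3 := by
      apply pow_le_pow_left₀ (by positivity) h1
    have h4 : a ^ 3 * ((k : ℝ) + 1) ^ 2 ≤ (a * ((k : ℝ) + 1)) ^ 3 := by
      rw [mul_pow]
      have : ((k : ℝ) + 1) ^ 2 ≤ ((k : ℝ) + 1) ^ 3 := by
        apply pow_le_pow_right₀ (by linarith)
        norm_num
      nlinarith [pow_pos ha 3]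
    calc (2:ℝ) * ((x + (k : ℝ)) ^ 3)⁻¹ ≤ 2 * ((a ^ 3) * (((k : ℝ) + 1) ^ 2))⁻¹ := by
          have := inv_anti₀ (by positivity : (0:ℝ) < a ^ 3 * ((k:ℝ)+1) ^ 2) (le_trans h4 h3)
          linarith
      _ = 2 * (a ^ 3)⁻¹ * (((k : ℝ) + 1) ^ 2)⁻¹ := by rw [mul_inv, mul_assoc]
  have base := tendstoUniformlyOn_tsum_nat (s := Ioo a b) (sumk.mul_left (2 * (a ^ 3)⁻¹)) hfu
  intro u hu
  exact (tendsto_add_atTop_nat 1).eventually (base u hu)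

lemma tendsto_c :
    Tendsto (fun n : ℕ => Real.log n - (harmonic (n + 1) : ℝ)) atTop
      (𝓝 (-Real.eulerMascheroniConstant)) := by
  have h1 : Tendsto (fun n : ℕ => (harmonic (n + 1) : ℝ) - Real.log (n + 1)) atTop
      (𝓝 Real.eulerMascheroniConstant) := by
    have := Real.tendsto_harmonic_sub_log.comp (tendsto_add_atTop_nat 1)
    refine this.congr fun n => ?_
    simp only [Function.comp_apply]
    push_cast
    ring_nf
  have h2 : Tendsto (fun n : ℕ => Real.log (n + 1) - Real.log n) atTop (𝓝 0) := by
    have h3 : Tendsto (fun n : ℕ => (1 : ℝ) + 1 / n) atTop (𝓝 1) := by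
      have := tendsto_one_div_atTop_nhds_zero_nat (𝕜 := ℝ)
      simpa using tendsto_const_nhds.add this
    have h4 : Tendsto (fun n : ℕ => Real.log (1 + 1 / n)) atTop (𝓝 0) := by
      have := (Real.continuousAt_log one_ne_zero).tendsto.comp h3
      simpa [Function.comp_def] using this
    apply h4.congr'
    filter_upwards [eventually_ge_atTop 1] with n hn
    have hn' : (0:ℝ) < n := by exact_mod_cast hn
    rw [← Real.log_div (by positivity) hn'.ne']
    congr 1
    field_simp
  have := (h1.neg.sub h2)
  simp only [neg_sub] at this
  have h5 : Tendsto (fun n : ℕ =>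
      (Real.log (n+1) - (harmonic (n + 1) : ℝ)) - (Real.log (n + 1) - Real.log n)) atTop
      (𝓝 (-Real.eulerMascheroniConstant - 0)) := by
    have e : ∀ n : ℕ, (Real.log (n+1) - (harmonic (n + 1) : ℝ)) - (Real.log (n + 1) - Real.log n)
        = -((harmonic (n + 1) : ℝ) - Real.log (n+1)) - (Real.log (n + 1) - Real.log n) := by
      intro n; ring
    simp only [e]
    exact h1.neg.sub h2
  rw [sub_zero] at h5
  apply h5.congr fun n => by ring

lemma harmonic_cast (n : ℕ) :
    (harmonic n : ℝ) = ∑ k ∈ Finset.range n, ((k : ℝ) + 1)⁻¹ := by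
  rw [harmonic]
  push_cast
  rfl

lemma U1 (ha : 0 < a) (ha1 : a ≤ 1) : TendstoUniformlyOn d1 p1 atTop (Ioo a b) := by
  have hfu : ∀ (k : ℕ) (x : ℝ), x ∈ Ioo a b →
      ‖(x + (k : ℝ))⁻¹ - ((k : ℝ) + 1)⁻¹‖ ≤ (1 + b) * a⁻¹ * (((k : ℝ) + 1) ^ 2)⁻¹ := by
    intro k x hx
    have h1 := mem_bound ha ha1 hx k
    have hxk : (0:ℝ) < x + k := lt_of_lt_of_le (by positivity) h1
    have hk1 : (0:ℝ) < (k : ℝ) + 1 := by positivity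
    have hxb : x < b := hx.2
    have hxa : a < x := hx.1
    have heq : (x + (k : ℝ))⁻¹ - ((k : ℝ) + 1)⁻¹ = (1 - x) / ((x + k) * ((k : ℝ) + 1)) := by
      field_simp
      ring
    rw [heq, Real.norm_eq_abs, abs_div, abs_of_pos (mul_pos hxk hk1)]
    have habs : |1 - x| ≤ 1 + b := by
      rw [abs_le]; constructor <;> nlinarith
    have hD : a * (((k : ℝ) + 1) ^ 2) ≤ (x + k) * ((k : ℝ) + 1) := by
      have := mul_le_mul_of_nonneg_right h1 (le_of_lt hk1)
      nlinarith
    calc |1 - x| / ((x + k) * ((k : ℝ) + 1)) ≤ (1 + b) / (a * (((k : ℝ) + 1) ^ 2)) := by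
          apply div_le_div₀ (by nlinarith) habs (by positivity) hD
      _ = (1 + b) * a⁻¹ * (((k : ℝ) + 1) ^ 2)⁻¹ := by
          rw [div_eq_mul_inv, mul_inv, ← mul_assoc]
  have base := tendstoUniformlyOn_tsum_nat (s := Ioo a b) (sumk.mul_left ((1 + b) * a⁻¹)) hfu
  have Ug : TendstoUniformlyOn
      (fun n (x : ℝ) => ∑ k ∈ Finset.range (n + 1), ((x + (k : ℝ))⁻¹ - ((k : ℝ) + 1)⁻¹))
      (fun x => ∑' k : ℕ, ((x + (k : ℝ))⁻¹ - ((k : ℝ) + 1)⁻¹)) atTop (Ioo a b) := by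
    intro u hu
    exact (tendsto_add_atTop_nat 1).eventually (base u hu)
  have Uc : TendstoUniformlyOn (fun (n : ℕ) (_ : ℝ) => Real.log n - (harmonic (n + 1) : ℝ))
      (fun _ => -Real.eulerMascheroniConstant) atTop (Ioo a b) :=
    tendsto_c.tendstoUniformlyOn_const _
  have comb := Uc.sub Ug
  apply comb.congr
  filter_upwards with n
  intro x _
  simp only [Pi.sub_apply, d1, Finset.sum_sub_distrib]
  rw [harmonic_cast]
  ring

lemma window {x : ℝ} (hx : 0 < x) :
    ∃ a b : ℝ, 0 < a ∧ a ≤ 1 ∧ x ∈ Ioo a b := by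
  refine ⟨min x 1 / 2, x + 1, by positivity, ?_, ?_, by linarith⟩
  · have : min x 1 ≤ 1 := min_le_right _ _
    linarith
  · have h1 : min x 1 ≤ x := min_le_left _ _
    have h2 : 0 < min x 1 := lt_min hx one_pos
    linarith

lemma hasDerivAt_logGamma {x : ℝ} (hx : 0 < x) :
    HasDerivAt (fun t : ℝ => Real.log (Real.Gamma t)) (p1 x) x := by
  obtain ⟨a, b, ha, ha1, hmem⟩ := window hx
  refine hasDerivAt_of_tendstoUniformlyOn (f := ell) (f' := d1) isOpen_Ioo (U1 ha ha1) ?_ ?_ hmem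
  · filter_upwards with n y hy
    exact hasDerivAt_ell n (lt_trans ha hy.1)
  · intro y hy
    have hy0 : 0 < y := lt_trans ha hy.1
    have hG : Tendsto (fun n => Real.log (Real.GammaSeq y n)) atTop
        (𝓝 (Real.log (Real.Gamma y))) :=
      ((Real.continuousAt_log (Real.Gamma_pos_of_pos hy0).ne').tendsto).comp
        (Real.GammaSeq_tendsto_Gamma y)
    apply hG.congr'
    filter_upwards [eventually_ge_atTop 1] with n hn
    have hnR : (0:ℝ) < n := by exact_mod_cast hn
    have hprod : ∀ j ∈ Finset.range (n + 1), (0:ℝ) < y + j := fun j _ => xk_pos hy0 j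
    have hprodpos : (0:ℝ) < ∏ j ∈ Finset.range (n + 1), (y + (j : ℝ)) :=
      Finset.prod_pos hprod
    have hfact : (0:ℝ) < (Nat.factorial n : ℝ) := by
      exact_mod_cast Nat.factorial_pos n
    have hrpow : (0:ℝ) < (n : ℝ) ^ y := Real.rpow_pos_of_pos hnR y
    have e : Real.GammaSeq y n
        = (n : ℝ) ^ y * (Nat.factorial n : ℝ) / ∏ j ∈ Finset.range (n + 1), (y + (j : ℝ)) := rfl
    rw [e, Real.log_div (by positivity) hprodpos.ne', Real.log_mul hrpow.ne' hfact.ne',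
      Real.log_rpow hnR, Real.log_prod (fun j hj => (hprod j hj).ne')]
    rw [ell]
    ring

lemma hasDerivAt_p1 {x : ℝ} (hx : 0 < x) : HasDerivAt p1 (p2 x) x := by
  obtain ⟨a, b, ha, ha1, hmem⟩ := window hx
  refine hasDerivAt_of_tendstoUniformlyOn (f := d1) (f' := d2) isOpen_Ioo (U2 ha ha1) ?_ ?_ hmem
  · filter_upwards with n y hy
    exact hasDerivAt_d1 n (lt_trans ha hy.1)
  · intro y hy
    exact (U1 ha ha1).tendsto_at hy

lemma hasDerivAt_p2 {x : ℝ} (hx : 0 < x) : HasDerivAt p2 (p3 x) x := by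
  obtain ⟨a, b, ha, ha1, hmem⟩ := window hx
  refine hasDerivAt_of_tendstoUniformlyOn (f := d2) (f' := d3) isOpen_Ioo (U3 ha ha1) ?_ ?_ hmem
  · filter_upwards with n y hy
    exact hasDerivAt_d2 n (lt_trans ha hy.1)
  · intro y hy
    exact (U2 ha ha1).tendsto_at hy

end Uniform

end QAux
namespace QAux
open Real Filter Set Finset Topology

lemma psi_eq {x : ℝ} (hx : 0 < x) : psi x = p1 x := (hasDerivAt_logGamma hx).deriv

noncomputable def R (x : ℝ) : ℝ := Real.exp (p1 (x + 1)) - x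

noncomputable def R1 (x : ℝ) : ℝ := p2 (x + 1) * Real.exp (p1 (x + 1)) - 1

lemma hasDerivAt_p1_comp {x : ℝ} (hx : -1 < x) :
    HasDerivAt (fun y : ℝ => p1 (y + 1)) (p2 (x + 1)) x := by
  have h0 : (0:ℝ) < x + 1 := by linarith
  have := (hasDerivAt_p1 h0).comp x ((hasDerivAt_id x).add_const 1)
  simpa [Function.comp_def] using this

lemma hasDerivAt_p2_comp {x : ℝ} (hx : -1 < x) :
    HasDerivAt (fun y : ℝ => p2 (y + 1)) (p3 (x + 1)) x := by
  have h0 : (0:ℝ) < x + 1 := by linarith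
  have := (hasDerivAt_p2 h0).comp x ((hasDerivAt_id x).add_const 1)
  simpa [Function.comp_def] using this

lemma hasDerivAt_R {x : ℝ} (hx : -1 < x) : HasDerivAt R (R1 x) x := by
  have h2 := (hasDerivAt_p1_comp hx).exp
  have h3 := h2.sub (hasDerivAt_id x)
  have e : Real.exp (p1 (x + 1)) * p2 (x + 1) - 1 = R1 x := by rw [R1]; ring
  rw [← e]
  exact h3

lemma hasDerivAt_R1 {x : ℝ} (hx : -1 < x) :
    HasDerivAt R1 ((p3 (x + 1) + (p2 (x + 1)) ^ 2) * Real.exp (p1 (x + 1))) x := by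
  have h := ((hasDerivAt_p2_comp hx).mul (hasDerivAt_p1_comp hx).exp).sub_const 1
  refine h.congr_deriv ?_
  ring

lemma deriv2_R {x : ℝ} (hx : -1 < x) :
    deriv (deriv R) x = (p3 (x + 1) + (p2 (x + 1)) ^ 2) * Real.exp (p1 (x + 1)) := by
  have hev : deriv R =ᶠ[𝓝 x] R1 := by
    filter_upwards [Ioi_mem_nhds hx] with y hy
    exact (hasDerivAt_R hy).deriv
  rw [hev.deriv_eq]
  exact (hasDerivAt_R1 hx).deriv

lemma strictConvex_R : StrictConvexOn ℝ (Ioi (-1 : ℝ)) R := by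
  apply strictConvexOn_of_deriv2_pos (convex_Ioi _)
  · intro x hx
    exact (hasDerivAt_R hx).continuousAt.continuousWithinAt
  · intro x hx
    rw [interior_Ioi] at hx
    have hx' : (-1:ℝ) < x := hx
    have h0 : (0:ℝ) < x + 1 := by linarith
    have e : deriv^[2] R x = deriv (deriv R) x := by
      simp only [Function.iterate_succ_apply, Function.iterate_zero_apply]
    rw [e, deriv2_R hx']
    have hF := Fq_pos h0
    rw [Fq] at hF
    have h1 : 0 < p3 (x + 1) + (p2 (x + 1)) ^ 2 := by linarith
    exact mul_pos h1 (Real.exp_pos _)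

end QAux

theorem Q_strictConvexOn :
    StrictConvexOn ℝ (Set.Ioi (-1 : ℝ)) (fun x : ℝ => Real.exp (psi (x + 1)) - x) := by
  have hR := QAux.strictConvex_R
  have hEq : ∀ x ∈ Set.Ioi (-1 : ℝ), Real.exp (psi (x + 1)) - x = QAux.R x := by
    intro x hx
    have h0 : (0:ℝ) < x + 1 := by
      have : (-1:ℝ) < x := hx
      linarith
    rw [QAux.R, QAux.psi_eq h0]
  constructor
  · exact convex_Ioi _
  · intro x hx y hy hxy aa bb haa hbb hab
    have hmem : aa • x + bb • y ∈ Set.Ioi (-1 : ℝ) :=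
      (convex_Ioi (-1 : ℝ)) hx hy haa.le hbb.le hab
    simp only [smul_eq_mul]
    have e1 := hEq _ hx
    have e2 := hEq _ hy
    have e3 := hEq _ hmem
    simp only [smul_eq_mul] at e3
    rw [e1, e2, e3]
    have := hR.2 hx hy hxy haa hbb hab
    simpa using this
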